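/- arXiv:2203.16191 — 5 statements merged into one kernel-verified Lean document; each statement's English description precedes it below -/
import Mathlib

section
/- For a natural number N and real y, the reciprocal Gamma function satisfies |1/Γ(-N+iy)| ≤ |iy| · |1+iy| · |2+iy| ⋯ |N+iy| · e^{|y|^2}. -/
open Complex Filter Finset

private lemma aux_sum (n : ℕ) :
    ∑ j ∈ Finset.range (n+1), (1:ℝ)/((j:ℝ)+1)^2 ≤ 2 - 1/((n:ℝ)+1) := by
  induction n with
  | zero => norm_num
  | succ n ih =>
    rw [Finset.sum_range_succ]
    push_cast
    have h1 : (0:ℝ) < (n:ℝ)+1 := by positivity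
    have h2 : (0:ℝ) < (n:ℝ)+2 := by positivity
    have key : 1/((n:ℝ)+1+1)^2 + 1/((n:ℝ)+1+1) ≤ 1/((n:ℝ)+1) := by
      rw [div_add_div _ _ (by positivity) (by positivity),
        div_le_div_iff₀ (by positivity) h1]
      nlinarith
    linarith

private lemma aux_factor (j : ℕ) (y : ℝ) :
    ‖(1:ℂ) + (y:ℝ)*Complex.I + j‖ ≤ ((j:ℝ)+1) * Real.exp (y^2/(2*((j:ℝ)+1)^2)) := by
  set a : ℝ := (j:ℝ)+1 with ha
  have hapos : 0 < a := by positivity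
  have hre : ((1:ℂ) + (y:ℝ)*Complex.I + j).re = a := by simp [ha]; ring
  have him : ((1:ℂ) + (y:ℝ)*Complex.I + j).im = y := by simp
  rw [Complex.norm_def, Complex.normSq_apply, hre, him]
  have hdiv : a^2 * (y^2/a^2) = y^2 := by field_simp
  have hexp : a^2 + y^2 ≤ (a * Real.exp (y^2/(2*a^2)))^2 := by
    rw [mul_pow, pow_two (Real.exp _), ← Real.exp_add]
    have hane : a ≠ 0 := ne_of_gt hapos
    have : y^2/(2*a^2) + y^2/(2*a^2) = y^2/a^2 := by field_simp; ring
    rw [this]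
    nlinarith [Real.add_one_le_exp (y^2/a^2), sq_nonneg a]
  calc Real.sqrt (a*a + y*y) ≤ Real.sqrt ((a * Real.exp (y^2/(2*a^2)))^2) := by
        apply Real.sqrt_le_sqrt; nlinarith
    _ = a * Real.exp (y^2/(2*a^2)) := Real.sqrt_sq (by positivity)

private lemma aux_Gamma_one_add_ne_zero (y : ℝ) : Complex.Gamma (1 + (y:ℝ)*Complex.I) ≠ 0 := by
  apply Complex.Gamma_ne_zero
  intro m hm
  have := congrArg Complex.re hm
  simp at this
  have hm0 : (0:ℝ) ≤ (m:ℝ) := Nat.cast_nonneg m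
  linarith

private lemma aux_inv_Gamma_one_add (y : ℝ) :
    ‖Complex.Gamma (1 + (y:ℝ)*Complex.I)‖⁻¹ ≤ Real.exp (y^2) := by
  set s : ℂ := 1 + (y:ℝ)*Complex.I with hs
  have hG : Complex.Gamma s ≠ 0 := aux_Gamma_one_add_ne_zero y
  have htend : Tendsto (fun n => ‖Complex.GammaSeq s n‖⁻¹) atTop
      (nhds (‖Complex.Gamma s‖⁻¹)) := by
    apply Filter.Tendsto.inv₀
    · exact (continuous_norm.tendsto _).comp (Complex.GammaSeq_tendsto_Gamma s)
    · simpa using hG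
  have hb : Tendsto (fun n : ℕ => (1 + 1/(n:ℝ)) * Real.exp (y^2)) atTop
      (nhds (1 * Real.exp (y^2))) := by
    apply Filter.Tendsto.mul_const
    simpa using (tendsto_const_nhds : Tendsto (fun _ : ℕ => (1:ℝ)) atTop (nhds 1)).add tendsto_one_div_atTop_nhds_zero_nat
  have hle := le_of_tendsto_of_tendsto htend hb ?_
  · rwa [one_mul] at hle
  · filter_upwards [Filter.eventually_ge_atTop 1] with n hn
    have hnpos : (0:ℝ) < n := by exact_mod_cast hn
    -- compute abs of GammaSeq
    have habs : ‖Complex.GammaSeq s n‖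
        = (n:ℝ) * (n.factorial : ℝ) / ∏ j ∈ Finset.range (n+1), ‖s + j‖ := by
      rw [Complex.GammaSeq, norm_div, norm_mul, norm_prod]
      congr 2
      · rw [hs, show ((n:ℕ):ℂ) = ((n:ℝ):ℂ) by push_cast; ring,
          Complex.norm_cpow_eq_rpow_re_of_pos (by exact_mod_cast hn)]
        simp
      · simp
    have hPle : ∏ j ∈ Finset.range (n+1), ‖s + j‖
        ≤ ((n+1).factorial : ℝ) * Real.exp (y^2) := by
      have step : ∏ j ∈ Finset.range (n+1), ‖s + j‖
          ≤ ∏ j ∈ Finset.range (n+1), (((j:ℝ)+1) * Real.exp (y^2/(2*((j:ℝ)+1)^2))) := by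
        apply Finset.prod_le_prod
        · intro j _; positivity
        · intro j _; exact aux_factor j y
      refine step.trans ?_
      rw [Finset.prod_mul_distrib, ← Real.exp_sum]
      have hfact : ∏ j ∈ Finset.range (n+1), ((j:ℝ)+1) = ((n+1).factorial : ℝ) := by
        exact_mod_cast congrArg (Nat.cast : ℕ → ℝ)
          (Finset.prod_range_add_one_eq_factorial (n+1))
      rw [hfact]
      apply mul_le_mul_of_nonneg_left _ (by positivity)
      apply Real.exp_le_exp.mpr
      have : ∑ j ∈ Finset.range (n+1), y^2/(2*((j:ℝ)+1)^2)
          = (y^2/2) * ∑ j ∈ Finset.range (n+1), (1:ℝ)/((j:ℝ)+1)^2 := by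
        rw [Finset.mul_sum]
        apply Finset.sum_congr rfl
        intro j _
        have hj1 : ((j:ℝ)+1) ≠ 0 := by positivity
        field_simp
      rw [this]
      have h2 := aux_sum n
      have hy2 : (0:ℝ) ≤ y^2/2 := by positivity
      have hsum2 : ∑ j ∈ Finset.range (n+1), (1:ℝ)/((j:ℝ)+1)^2 ≤ 2 := by
        refine h2.trans ?_
        have h3 : (0:ℝ) < (n:ℝ)+1 := by positivity
        nlinarith [one_div_pos.mpr h3]
      nlinarith
    have hPpos : 0 < ∏ j ∈ Finset.range (n+1), ‖s + j‖ := by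
      apply Finset.prod_pos
      intro j _
      rw [norm_pos_iff]
      intro h
      have := congrArg Complex.re h
      simp [hs] at this
      have : (0:ℝ) ≤ (j:ℝ) := Nat.cast_nonneg j
      linarith
    rw [habs, inv_div, div_le_iff₀ (by positivity)]
    calc ∏ j ∈ Finset.range (n+1), ‖s + j‖
        ≤ ((n+1).factorial : ℝ) * Real.exp (y^2) := hPle
      _ = (1 + 1/(n:ℝ)) * Real.exp (y^2) * ((n:ℝ) * (n.factorial:ℝ)) := by
          rw [Nat.factorial_succ]
          push_cast
          field_simp

theorem inv_Gamma_neg_nat_bound (N : ℕ) (y : ℝ) :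
    ‖(Complex.Gamma (-(N : ℂ) + y * Complex.I))⁻¹‖
      ≤ (∏ k ∈ Finset.range (N + 1), ‖(k : ℂ) + y * Complex.I‖)
        * Real.exp (|y| ^ 2) := by
  by_cases hy : y = 0
  · subst hy
    simp [Complex.Gamma_neg_nat_eq_zero]
    positivity
  · set z : ℂ := -(N : ℂ) + y * Complex.I with hz
    have him : ∀ j : ℕ, z + j ≠ 0 := by
      intro j h
      have := congrArg Complex.im h
      simp [hz] at this
      exact hy this
    have hrec : ∀ n : ℕ, Complex.Gamma (z + n + 1)
        = (∏ j ∈ Finset.range (n+1), (z + j)) * Complex.Gamma z := by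
      intro n
      induction n with
      | zero =>
        rw [Nat.cast_zero, add_zero, Finset.prod_range_one, Nat.cast_zero, add_zero]
        exact Complex.Gamma_add_one z (by simpa using him 0)
      | succ n ih =>
        have hne : z + (n:ℂ) + 1 ≠ 0 := by
          have h := him (n+1)
          push_cast at h
          rwa [← add_assoc] at h
        have h1 : (((n+1 : ℕ)):ℂ) = (n:ℂ) + 1 := by push_cast; ring
        have h2 : z + ((n:ℂ)+1) + 1 = (z + n + 1) + 1 := by ring
        rw [h1, h2, Complex.Gamma_add_one _ hne, ih, Finset.prod_range_succ _ (n+1), h1]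
        ring
    have hkey := hrec N
    have harg : z + N + 1 = 1 + (y:ℝ)*Complex.I := by rw [hz]; ring
    rw [harg] at hkey
    have hG1 : Complex.Gamma (1 + (y:ℝ)*Complex.I) ≠ 0 := aux_Gamma_one_add_ne_zero y
    have hP : (∏ j ∈ Finset.range (N+1), (z + j)) ≠ 0 := Finset.prod_ne_zero_iff.mpr fun j _ => him j
    have hinv : (Complex.Gamma z)⁻¹
        = (∏ j ∈ Finset.range (N+1), (z + j)) * (Complex.Gamma (1 + (y:ℝ)*Complex.I))⁻¹ := by
      rw [hkey, mul_inv, ← mul_assoc, mul_inv_cancel₀ hP, one_mul]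
    rw [hinv, norm_mul, norm_prod, norm_inv]
    have hprodeq : ∏ j ∈ Finset.range (N+1), ‖z + j‖
        = ∏ k ∈ Finset.range (N+1), ‖(k : ℂ) + y * Complex.I‖ := by
      rw [← Finset.prod_range_reflect (fun k => ‖(k : ℂ) + y * Complex.I‖) (N+1)]
      apply Finset.prod_congr rfl
      intro j hj
      have hjN : j ≤ N := Nat.lt_succ_iff.mp (Finset.mem_range.mp hj)
      rw [Complex.norm_def, Complex.norm_def, Complex.normSq_apply, Complex.normSq_apply]
      congr 1
      simp [hz]
      rw [Nat.cast_sub hjN]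
      ring
    rw [hprodeq]
    apply mul_le_mul_of_nonneg_left _ (Finset.prod_nonneg fun k _ => norm_nonneg _)
    rw [_root_.sq_abs]
    exact aux_inv_Gamma_one_add y
end

section
/- For complex ν with Re ν ≥ 0 and real x ≥ 1, there is a constant C depending only on Re ν such that |K_ν(x)| ≤ C e^{π|Im ν|} x^{-1/2} e^{-x}, where K_ν is given by the integral representation K_ν(x) = (π/2)^{1/2} x^ν e^{-x}/Γ(ν+1/2) ∫_0^∞ e^{-xτ}(τ+τ²/2)^{ν-1/2} dτ. -/
open Complex MeasureTheory

/-- The modified Bessel function of the second kind for `Re ν > -1/2`, defined by the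
integral representation
`K_ν(x) = (π/2)^{1/2} x^ν e^{-x} / Γ(ν+1/2) ∫_0^∞ e^{-xτ} (τ+τ²/2)^{ν-1/2} dτ`. -/
noncomputable def besselK (ν : ℂ) (x : ℝ) : ℂ :=
  (Real.sqrt (Real.pi / 2) : ℂ) * (x : ℂ) ^ ν * Real.exp (-x) / Complex.Gamma (ν + 1 / 2)
    * ∫ τ in Set.Ioi (0 : ℝ),
        (Real.exp (-x * τ) : ℂ) * ((τ : ℂ) + (τ : ℂ) ^ 2 / 2) ^ (ν - 1 / 2)


open Set Real


lemma sinh_le_mul_exp {t : ℝ} (ht : 0 ≤ t) : Real.sinh t ≤ t * Real.exp t := by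
  rw [Real.sinh_eq]
  have h1 : 1 - 2 * t ≤ Real.exp (-(2 * t)) := by
    have := Real.add_one_le_exp (-(2 * t)); linarith
  have h2 : Real.exp (-t) = Real.exp t * Real.exp (-(2 * t)) := by
    rw [← Real.exp_add]; ring_nf
  nlinarith [Real.exp_pos t, Real.exp_pos (-(2 * t))]

lemma abs_sin_le (z : ℂ) : ‖Complex.sin z‖ ≤ ‖z‖ * Real.exp |z.im| := by
  have hz : z = (z.re : ℂ) + (z.im : ℂ) * Complex.I := (Complex.re_add_im z).symm
  set x := z.re with hx
  set y := z.im with hy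
  have hsin : Complex.sin z = ((Real.sin x * Real.cosh y : ℝ) : ℂ)
      + ((Real.cos x * Real.sinh y : ℝ) : ℂ) * Complex.I := by
    rw [hz, Complex.sin_add, Complex.cos_mul_I, Complex.sin_mul_I]
    push_cast
    ring
  have h1 : ‖Complex.sin z‖
      = Real.sqrt ((Real.sin x * Real.cosh y) ^ 2 + (Real.cos x * Real.sinh y) ^ 2) := by
    rw [hsin, Complex.norm_def, Complex.normSq_add_mul_I]
  have h2 : ‖z‖ = Real.sqrt (x ^ 2 + y ^ 2) := by
    rw [hz, Complex.norm_def, Complex.normSq_add_mul_I]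
  rw [h1, h2, ← Real.sqrt_sq (Real.exp_nonneg |y|), ← Real.sqrt_mul (by positivity)]
  apply Real.sqrt_le_sqrt
  have hs : Real.sin x ^ 2 ≤ x ^ 2 := by
    calc Real.sin x ^ 2 = |Real.sin x| ^ 2 := (_root_.sq_abs _).symm
      _ ≤ |x| ^ 2 := pow_le_pow_left₀ (abs_nonneg _) Real.abs_sin_le_abs 2
      _ = x ^ 2 := _root_.sq_abs _
  have hc : Real.cos x ^ 2 ≤ 1 := by
    calc Real.cos x ^ 2 = |Real.cos x| ^ 2 := (_root_.sq_abs _).symm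
      _ ≤ 1 ^ 2 := pow_le_pow_left₀ (abs_nonneg _) (Real.abs_cos_le_one x) 2
      _ = 1 := one_pow 2
  have hch : Real.cosh y ^ 2 ≤ Real.exp |y| ^ 2 := by
    have h0 : Real.exp (-|y|) ≤ Real.exp |y| :=
      Real.exp_le_exp.mpr (by linarith [abs_nonneg y])
    have h1 : Real.cosh y ≤ Real.exp |y| := by
      rw [← Real.cosh_abs, Real.cosh_eq]; linarith
    nlinarith [Real.cosh_pos (x := y)]
  have hsh : Real.sinh y ^ 2 ≤ y ^ 2 * Real.exp |y| ^ 2 := by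
    have h1 : Real.sinh |y| ≤ |y| * Real.exp |y| := sinh_le_mul_exp (abs_nonneg y)
    have h2 : Real.sinh y ^ 2 = Real.sinh |y| ^ 2 := by
      rcases abs_cases y with ⟨h, _⟩ | ⟨h, _⟩ <;> rw [h] <;> simp [Real.sinh_neg]
    have h3 : 0 ≤ Real.sinh |y| := Real.sinh_nonneg_iff.mpr (abs_nonneg y)
    nlinarith [_root_.sq_abs y, abs_nonneg y, Real.exp_pos |y|]
  nlinarith [mul_le_mul hs hch (sq_nonneg (Real.cosh y)) (sq_nonneg x),
    mul_le_mul hc hsh (sq_nonneg (Real.sinh y)) zero_le_one]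


lemma abs_Gamma_le {z : ℂ} (h1 : 1/2 ≤ z.re) (h2 : z.re ≤ 3/2) :
    ‖Complex.Gamma z‖ ≤ Real.Gamma (1/2) + Real.Gamma (3/2) := by
  have hz : 0 < z.re := lt_of_lt_of_le (by norm_num) h1
  rw [Complex.Gamma_eq_integral hz, Complex.GammaIntegral]
  have hint1 := Real.GammaIntegral_convergent (show (0:ℝ) < 1/2 by norm_num)
  have hint3 := Real.GammaIntegral_convergent (show (0:ℝ) < 3/2 by norm_num)
  have key : ‖∫ x in Ioi (0:ℝ), (Real.exp (-x) : ℂ) * (x:ℂ) ^ (z - 1)‖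
      ≤ ∫ x in Ioi (0:ℝ),
        (Real.exp (-x) * x ^ ((1:ℝ)/2 - 1) + Real.exp (-x) * x ^ ((3:ℝ)/2 - 1)) := by
    apply norm_integral_le_of_norm_le (hint1.add hint3)
    filter_upwards [ae_restrict_mem measurableSet_Ioi] with τ hτ
    have hτ0 : (0:ℝ) < τ := hτ
    rw [norm_mul, Complex.norm_real, Real.norm_eq_abs,
      Complex.norm_cpow_eq_rpow_re_of_pos hτ0, _root_.abs_of_nonneg (Real.exp_nonneg _)]
    have hre : (z - 1).re = z.re - 1 := by simp
    rw [hre]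
    simp only [Pi.add_apply]
    rcases le_or_gt τ 1 with h | h
    · have : τ ^ (z.re - 1) ≤ τ ^ ((1:ℝ)/2 - 1) :=
        Real.rpow_le_rpow_of_exponent_ge hτ0 h (by linarith)
      nlinarith [Real.exp_pos (-τ), Real.rpow_nonneg hτ0.le ((3:ℝ)/2 - 1),
        mul_le_mul_of_nonneg_left this (Real.exp_nonneg (-τ))]
    · have : τ ^ (z.re - 1) ≤ τ ^ ((3:ℝ)/2 - 1) :=
        Real.rpow_le_rpow_of_exponent_le h.le (by linarith)
      nlinarith [Real.exp_pos (-τ), Real.rpow_nonneg hτ0.le ((1:ℝ)/2 - 1),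
        mul_le_mul_of_nonneg_left this (Real.exp_nonneg (-τ))]
  refine key.trans (le_of_eq ?_)
  rw [integral_add hint1 hint3, ← Real.Gamma_eq_integral (by norm_num : (0:ℝ) < 1/2),
    ← Real.Gamma_eq_integral (by norm_num : (0:ℝ) < 3/2)]

lemma gamma_shift (m : ℕ) (z : ℂ) (hz : 1/2 ≤ z.re) :
    ‖Complex.Gamma z‖ * (1/2) ^ m ≤ ‖Complex.Gamma (z + m)‖ := by
  induction m with
  | zero => simp
  | succ n ih =>
    have hnn : (0:ℝ) ≤ (n:ℝ) := Nat.cast_nonneg n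
    have hn : z + ((n:ℕ)+1 : ℕ) = (z + n) + 1 := by push_cast; ring
    have hne : z + n ≠ 0 := by
      intro h
      have := congrArg Complex.re h
      simp [Complex.add_re] at this
      linarith
    rw [hn, Complex.Gamma_add_one _ hne, norm_mul]
    have h2 : 1/2 ≤ ‖z + n‖ := by
      calc (1:ℝ)/2 ≤ (z + n).re := by simp [Complex.add_re]; linarith
        _ ≤ ‖z + n‖ := Complex.re_le_norm _
    calc ‖Complex.Gamma z‖ * (1/2) ^ (n+1)
        = (‖Complex.Gamma z‖ * (1/2) ^ n) * (1/2) := by ring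
      _ ≤ ‖Complex.Gamma (z + n)‖ * (1/2) :=
          mul_le_mul_of_nonneg_right ih (by norm_num)
      _ = (1/2) * ‖Complex.Gamma (z + n)‖ := by ring
      _ ≤ ‖z + n‖ * ‖Complex.Gamma (z + n)‖ :=
          mul_le_mul_of_nonneg_right h2 (norm_nonneg _)

lemma integrable_rpow_exp {p r : ℝ} (hp : -1 < p) (hr : 0 < r) :
    IntegrableOn (fun t : ℝ => t ^ p * Real.exp (-(r * t))) (Set.Ioi 0) := by
  have h := Real.GammaIntegral_convergent (show 0 < p + 1 by linarith)
  have h2 : IntegrableOn (fun x : ℝ => Real.exp (-(r * x)) * (r * x) ^ (p + 1 - 1)) (Ioi 0) := by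
    have := (integrableOn_Ioi_comp_mul_left_iff
      (fun x : ℝ => Real.exp (-x) * x ^ (p + 1 - 1)) 0 hr).mpr (by simpa using h)
    simpa using this
  have h3 : IntegrableOn
      (fun x : ℝ => (r ^ p)⁻¹ * (Real.exp (-(r * x)) * (r * x) ^ (p + 1 - 1))) (Ioi 0) :=
    h2.const_mul (r ^ p)⁻¹
  refine IntegrableOn.congr_fun h3 (fun t ht => ?_) measurableSet_Ioi
  have ht0 : (0:ℝ) < t := ht
  have hrp : (0:ℝ) < r ^ p := Real.rpow_pos_of_pos hr p
  rw [add_sub_cancel_right, Real.mul_rpow hr.le ht0.le]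
  field_simp

lemma pointwise_bound {b τ : ℝ} (hτ : 0 < τ) :
    (τ + τ ^ 2 / 2) ^ b ≤ 2 ^ |b| * (τ ^ b + τ ^ (max (2 * b) 0)) := by
  have hτb : (0:ℝ) ≤ τ ^ b := Real.rpow_nonneg hτ.le b
  rcases le_or_gt 0 b with hb | hb
  · have habs : |b| = b := abs_of_nonneg hb
    have hd : max (2 * b) 0 = 2 * b := max_eq_left (by linarith)
    have hdn : (0:ℝ) ≤ τ ^ (2 * b) := Real.rpow_nonneg hτ.le _
    have h2b : (0:ℝ) ≤ (2:ℝ) ^ b := Real.rpow_nonneg (by norm_num) b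
    rw [habs, hd]
    rcases le_or_gt τ 1 with h1 | h1
    · have hle : τ + τ ^ 2 / 2 ≤ 2 * τ := by nlinarith
      calc (τ + τ ^ 2 / 2) ^ b ≤ (2 * τ) ^ b :=
            Real.rpow_le_rpow (by positivity) hle hb
        _ = 2 ^ b * τ ^ b := Real.mul_rpow (by norm_num) hτ.le
        _ ≤ 2 ^ b * (τ ^ b + τ ^ (2 * b)) := by nlinarith
    · have hle : τ + τ ^ 2 / 2 ≤ 2 * τ ^ 2 := by nlinarith
      calc (τ + τ ^ 2 / 2) ^ b ≤ (2 * τ ^ 2) ^ b :=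
            Real.rpow_le_rpow (by positivity) hle hb
        _ = 2 ^ b * τ ^ (2 * b) := by
            rw [Real.mul_rpow (by norm_num) (by positivity), ← Real.rpow_natCast τ 2,
              ← Real.rpow_mul hτ.le]
            norm_num
        _ ≤ 2 ^ b * (τ ^ b + τ ^ (2 * b)) := by nlinarith
  · have habs : |b| = -b := abs_of_neg hb
    have hd : max (2 * b) 0 = 0 := max_eq_right (by linarith)
    have h2b1 : (1:ℝ) ≤ 2 ^ (-b) := by
      rw [show (1:ℝ) = 2 ^ (0:ℝ) from (Real.rpow_zero 2).symm]
      exact Real.rpow_le_rpow_of_exponent_le (by norm_num) (by linarith)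
    rw [habs, hd, Real.rpow_zero]
    rcases le_or_gt τ 1 with h1 | h1
    · have hle : (τ + τ ^ 2 / 2) ^ b ≤ τ ^ b :=
        Real.rpow_le_rpow_of_nonpos hτ (by nlinarith) hb.le
      nlinarith
    · have hle : (τ + τ ^ 2 / 2) ^ b ≤ (τ ^ 2 / 2) ^ b :=
        Real.rpow_le_rpow_of_nonpos (by positivity) (by nlinarith) hb.le
      have heq : (τ ^ 2 / 2) ^ b = 2 ^ (-b) * τ ^ (2 * b) := by
        rw [Real.div_rpow (by positivity) (by norm_num), ← Real.rpow_natCast τ 2,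
          ← Real.rpow_mul hτ.le, Real.rpow_neg (by norm_num)]
        norm_num
        ring
      have hτ2b : τ ^ (2 * b) ≤ 1 :=
        Real.rpow_le_one_of_one_le_of_nonpos h1.le (by linarith)
      have h2bpos : (0:ℝ) < 2 ^ (-b) := Real.rpow_pos_of_pos (by norm_num) _
      calc (τ + τ ^ 2 / 2) ^ b ≤ 2 ^ (-b) * τ ^ (2 * b) := heq ▸ hle
        _ ≤ 2 ^ (-b) * 1 := by nlinarith
        _ ≤ 2 ^ (-b) * (τ ^ b + 1) := by nlinarith



lemma gamma_lower (a : ℝ) (ha : 0 ≤ a) : ∃ c : ℝ, 0 < c ∧ ∀ ν : ℂ, ν.re = a →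
    c * Real.exp (-(Real.pi * |ν.im|)) ≤ ‖Complex.Gamma (ν + 1/2)‖ := by
  set m := Nat.floor a with hm
  set B := Real.Gamma (1/2) + Real.Gamma (3/2) with hB
  have hBpos : 0 < B := by
    have := Real.Gamma_pos_of_pos (show (0:ℝ) < 1/2 by norm_num)
    have := Real.Gamma_pos_of_pos (show (0:ℝ) < 3/2 by norm_num)
    positivity
  have hΓa : 0 < Real.Gamma (a + 1/2) := Real.Gamma_pos_of_pos (by linarith)
  refine ⟨min (Real.Gamma (a + 1/2)) (((1:ℝ)/2) ^ m / B), lt_min hΓa (by positivity), ?_⟩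
  intro ν hre
  rcases eq_or_ne ν.im 0 with ht | ht
  · have hν : ν = (a : ℂ) := Complex.ext (by simp [hre]) (by simp [ht])
    have h12 : ν + 1/2 = ((a + 1/2 : ℝ) : ℂ) := by rw [hν]; push_cast; ring
    rw [h12, Complex.Gamma_ofReal, Complex.norm_real, Real.norm_eq_abs, _root_.abs_of_pos hΓa, ht]
    simp only [abs_zero, mul_zero, neg_zero, Real.exp_zero, mul_one]
    exact min_le_left _ _
  · set t := ν.im with htdef
    set s₀ : ℂ := ν + 1/2 - m with hs₀
    have hs₀re : s₀.re = a + 1/2 - m := by simp [hs₀, hre]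
    have hs₀im : s₀.im = t := by simp [hs₀, htdef]
    have hmle : (m:ℝ) ≤ a := Nat.floor_le ha
    have hmlt : a < m + 1 := Nat.lt_floor_add_one a
    have h1 : 1/2 ≤ s₀.re := by rw [hs₀re]; linarith
    have h2 : s₀.re < 3/2 := by rw [hs₀re]; linarith
    have hπ : ((Real.pi : ℝ) : ℂ) ≠ 0 := by
      exact_mod_cast Real.pi_ne_zero
    have hsin : Complex.sin (Real.pi * s₀) ≠ 0 := by
      intro h
      obtain ⟨k, hk⟩ := Complex.sin_eq_zero_iff.mp h
      have hks : s₀ = (k : ℂ) := by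
        apply mul_left_cancel₀ hπ
        rw [hk]; ring
      have : s₀.im = 0 := by rw [hks]; simp
      rw [hs₀im] at this; exact ht this
    have h1s₀ : (1:ℂ) - s₀ ≠ 0 := by
      intro h
      have := congrArg Complex.im h
      simp [hs₀im] at this
      exact ht this
    have habs1s₀ : 0 < ‖1 - s₀‖ := norm_pos_iff.mpr h1s₀
    have habs : Real.pi = ‖Complex.sin (Real.pi * s₀)‖ *
        (‖Complex.Gamma s₀‖ * ‖Complex.Gamma (1 - s₀)‖) := by
      have hstep : Complex.sin (Real.pi * s₀) * (Complex.Gamma s₀ * Complex.Gamma (1 - s₀))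
          = (Real.pi : ℂ) := by
        rw [Complex.Gamma_mul_Gamma_one_sub]
        field_simp
      have h' := congrArg (‖·‖) hstep
      rw [norm_mul, norm_mul, Complex.norm_real, Real.norm_eq_abs, _root_.abs_of_pos Real.pi_pos] at h'
      exact h'.symm
    have habsΓ1 : ‖Complex.Gamma (1 - s₀)‖
        = ‖Complex.Gamma (2 - s₀)‖ / ‖1 - s₀‖ := by
      have hsh : Complex.Gamma (2 - s₀) = (1 - s₀) * Complex.Gamma (1 - s₀) := by
        have h := Complex.Gamma_add_one (1 - s₀) h1s₀
        rw [show (2:ℂ) - s₀ = 1 - s₀ + 1 by ring, h]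
      rw [hsh, norm_mul, mul_comm, mul_div_assoc, div_self habs1s₀.ne', mul_one]
    have hsinb : ‖Complex.sin (Real.pi * s₀)‖
        ≤ Real.pi * ‖1 - s₀‖ * Real.exp (Real.pi * |t|) := by
      have heq : Complex.sin ((Real.pi : ℂ) * s₀) = Complex.sin ((Real.pi : ℂ) * (1 - s₀)) := by
        rw [show (Real.pi : ℂ) * (1 - s₀) = Real.pi - Real.pi * s₀ by ring, Complex.sin_pi_sub]
      have him : (((Real.pi : ℝ) : ℂ) * (1 - s₀)).im = Real.pi * (-t) := by
        simp [Complex.mul_im, hs₀im]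
      calc ‖Complex.sin (Real.pi * s₀)‖
          = ‖Complex.sin ((Real.pi : ℂ) * (1 - s₀))‖ := by rw [heq]
        _ ≤ ‖(Real.pi : ℂ) * (1 - s₀)‖ * Real.exp |(((Real.pi:ℝ):ℂ) * (1 - s₀)).im| :=
            abs_sin_le _
        _ = Real.pi * ‖1 - s₀‖ * Real.exp (Real.pi * |t|) := by
            rw [norm_mul, Complex.norm_real, Real.norm_eq_abs, _root_.abs_of_pos Real.pi_pos, him, abs_mul,
              abs_neg, _root_.abs_of_pos Real.pi_pos]
    have hΓ2b : ‖Complex.Gamma (2 - s₀)‖ ≤ B := by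
      apply abs_Gamma_le
      · simp only [Complex.sub_re]
        norm_num
        linarith
      · simp only [Complex.sub_re]
        norm_num
        linarith
    have hE : (0:ℝ) < Real.exp (Real.pi * |t|) := Real.exp_pos _
    have key0 : 1 ≤ Real.exp (Real.pi * |t|) * B * ‖Complex.Gamma s₀‖ := by
      have hΓ0 : (0:ℝ) ≤ ‖Complex.Gamma s₀‖ := norm_nonneg _
      have hsub : ‖Complex.Gamma s₀‖ * ‖Complex.Gamma (1 - s₀)‖
          ≤ ‖Complex.Gamma s₀‖ * (B / ‖1 - s₀‖) := by
        apply mul_le_mul_of_nonneg_left _ hΓ0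
        rw [habsΓ1]
        gcongr
      have step : Real.pi ≤ (Real.pi * ‖1 - s₀‖ * Real.exp (Real.pi * |t|)) *
          (‖Complex.Gamma s₀‖ * (B / ‖1 - s₀‖)) :=
        habs.le.trans (mul_le_mul hsinb hsub (by positivity) (by positivity))
      have heq2 : (Real.pi * ‖1 - s₀‖ * Real.exp (Real.pi * |t|)) *
          (‖Complex.Gamma s₀‖ * (B / ‖1 - s₀‖))
          = Real.pi * (Real.exp (Real.pi * |t|) * B * ‖Complex.Gamma s₀‖) := by
        field_simp
      rw [heq2] at step
      nlinarith [Real.pi_pos]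
    have hΓs₀ : Real.exp (-(Real.pi * |t|)) / B ≤ ‖Complex.Gamma s₀‖ := by
      rw [Real.exp_neg, div_le_iff₀ hBpos]
      have h' := mul_le_mul_of_nonneg_left key0 (inv_nonneg.mpr hE.le)
      rw [mul_one] at h'
      calc (Real.exp (Real.pi * |t|))⁻¹
          ≤ (Real.exp (Real.pi * |t|))⁻¹ * (Real.exp (Real.pi * |t|) * B *
            ‖Complex.Gamma s₀‖) := h'
        _ = ‖Complex.Gamma s₀‖ * B := by field_simp
    have hs : ν + 1/2 = s₀ + m := by rw [hs₀]; ring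
    rw [hs]
    calc min (Real.Gamma (a + 1/2)) (((1:ℝ)/2) ^ m / B) * Real.exp (-(Real.pi * |t|))
        ≤ ((1:ℝ)/2) ^ m / B * Real.exp (-(Real.pi * |t|)) :=
          mul_le_mul_of_nonneg_right (min_le_right _ _) (Real.exp_nonneg _)
      _ = ((1:ℝ)/2) ^ m * (Real.exp (-(Real.pi * |t|)) / B) := by ring
      _ ≤ ((1:ℝ)/2) ^ m * ‖Complex.Gamma s₀‖ :=
          mul_le_mul_of_nonneg_left hΓs₀ (by positivity)
      _ = ‖Complex.Gamma s₀‖ * ((1:ℝ)/2) ^ m := by ring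
      _ ≤ ‖Complex.Gamma (s₀ + m)‖ := gamma_shift m s₀ h1



theorem besselK_bound_large (a : ℝ) (ha : 0 ≤ a) :
    ∃ C : ℝ, ∀ ν : ℂ, ν.re = a → ∀ x : ℝ, 1 ≤ x →
      ‖besselK ν x‖
        ≤ C * Real.exp (Real.pi * |ν.im|) * x ^ (-(1 / 2 : ℝ)) * Real.exp (-x) := by
  obtain ⟨c, hc, hΓ⟩ := gamma_lower a ha
  set b : ℝ := a - 1/2 with hbdef
  set d : ℝ := max (2 * b) 0 with hddef
  set C2 : ℝ := 2 ^ |b| * (Real.Gamma (b + 1) + Real.Gamma (d + 1)) with hC2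
  refine ⟨Real.sqrt (Real.pi / 2) * C2 / c, ?_⟩
  intro ν hre x hx
  have hx0 : (0:ℝ) < x := lt_of_lt_of_le one_pos hx
  have hb1 : (0:ℝ) < b + 1 := by rw [hbdef]; linarith
  have hd0 : (0:ℝ) ≤ d := le_max_right _ _
  have hd1 : (0:ℝ) < d + 1 := by linarith
  have hbd : b ≤ d := by
    rcases le_or_gt 0 b with h | h
    · exact le_max_of_le_left (by linarith)
    · exact h.le.trans hd0
  have hG1 : 0 < Real.Gamma (b + 1) := Real.Gamma_pos_of_pos hb1
  have hG2 : 0 < Real.Gamma (d + 1) := Real.Gamma_pos_of_pos hd1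
  have hK : (0:ℝ) < 2 ^ |b| := Real.rpow_pos_of_pos (by norm_num) _
  have hG := hΓ ν hre
  have hGpos : 0 < ‖Complex.Gamma (ν + 1/2)‖ :=
    lt_of_lt_of_le (by positivity) hG
  set I : ℂ := ∫ τ in Set.Ioi (0:ℝ),
      (Real.exp (-x * τ) : ℂ) * ((τ:ℂ) + (τ:ℂ) ^ 2 / 2) ^ (ν - 1/2) with hI
  have hint1 : IntegrableOn (fun τ : ℝ => τ ^ b * Real.exp (-(x * τ))) (Set.Ioi 0) :=
    integrable_rpow_exp (by linarith) hx0
  have hint2 : IntegrableOn (fun τ : ℝ => τ ^ d * Real.exp (-(x * τ))) (Set.Ioi 0) :=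
    integrable_rpow_exp (by linarith) hx0
  have key : ‖I‖ ≤ C2 * x ^ (-(a + 1/2)) := by
    have hnorm : ‖I‖ ≤ ∫ τ in Set.Ioi (0:ℝ),
        2 ^ |b| * (τ ^ b * Real.exp (-(x * τ)) + τ ^ d * Real.exp (-(x * τ))) := by
      rw [hI]
      apply norm_integral_le_of_norm_le ((hint1.add hint2).const_mul _)
      filter_upwards [ae_restrict_mem measurableSet_Ioi] with τ hτ
      have hτ0 : (0:ℝ) < τ := hτ
      have hpos : (0:ℝ) < τ + τ ^ 2 / 2 := by positivity
      have hcast : ((τ:ℂ) + (τ:ℂ) ^ 2 / 2) = ((τ + τ ^ 2 / 2 : ℝ) : ℂ) := by push_cast; ring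
      have hre2 : (ν - 1/2).re = b := by
        rw [Complex.sub_re, hre, hbdef]
        norm_num
      rw [hcast, norm_mul, Complex.norm_real, Real.norm_eq_abs,
        Complex.norm_cpow_eq_rpow_re_of_pos hpos, hre2,
        _root_.abs_of_nonneg (Real.exp_nonneg _)]
      have hp := pointwise_bound (b := b) hτ0
      rw [← hddef] at hp
      have hexp : Real.exp (-x * τ) = Real.exp (-(x * τ)) := by ring_nf
      rw [hexp]
      calc Real.exp (-(x * τ)) * (τ + τ ^ 2 / 2) ^ b
          ≤ Real.exp (-(x * τ)) * (2 ^ |b| * (τ ^ b + τ ^ d)) :=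
            mul_le_mul_of_nonneg_left hp (Real.exp_nonneg _)
        _ = 2 ^ |b| * (τ ^ b * Real.exp (-(x * τ)) + τ ^ d * Real.exp (-(x * τ))) := by ring
    have heval : (∫ τ in Set.Ioi (0:ℝ),
        2 ^ |b| * (τ ^ b * Real.exp (-(x * τ)) + τ ^ d * Real.exp (-(x * τ))))
        = 2 ^ |b| * ((1/x) ^ (b+1) * Real.Gamma (b+1) + (1/x) ^ (d+1) * Real.Gamma (d+1)) := by
      rw [integral_const_mul, integral_add hint1 hint2]
      congr 1
      congr 1
      · have h := Real.integral_rpow_mul_exp_neg_mul_Ioi hb1 hx0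
        rw [add_sub_cancel_right] at h
        exact h
      · have h := Real.integral_rpow_mul_exp_neg_mul_Ioi hd1 hx0
        rw [add_sub_cancel_right] at h
        exact h
    have e1 : ((1:ℝ)/x) ^ (b+1) = x ^ (-(a + 1/2)) := by
      rw [one_div, Real.inv_rpow hx0.le, ← Real.rpow_neg hx0.le]
      congr 1
      rw [hbdef]; ring
    have e2 : ((1:ℝ)/x) ^ (d+1) ≤ x ^ (-(a + 1/2)) := by
      rw [one_div, Real.inv_rpow hx0.le, ← Real.rpow_neg hx0.le]
      apply Real.rpow_le_rpow_of_exponent_le hx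
      rw [hbdef] at hbd; linarith
    refine hnorm.trans ?_
    rw [heval, e1]
    calc 2 ^ |b| * (x ^ (-(a + 1/2)) * Real.Gamma (b+1) + (1/x) ^ (d+1) * Real.Gamma (d+1))
        ≤ 2 ^ |b| * (x ^ (-(a + 1/2)) * Real.Gamma (b+1) + x ^ (-(a + 1/2)) * Real.Gamma (d+1)) := by
          apply mul_le_mul_of_nonneg_left _ hK.le
          apply add_le_add_right
          exact mul_le_mul_of_nonneg_right e2 hG2.le
      _ = C2 * x ^ (-(a + 1/2)) := by rw [hC2]; ring
  have hC2pos : (0:ℝ) < C2 := by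
    rw [hC2]; exact mul_pos hK (add_pos hG1 hG2)
  have habs : ‖besselK ν x‖ = Real.sqrt (Real.pi/2) * x ^ a * Real.exp (-x)
      / ‖Complex.Gamma (ν + 1/2)‖ * ‖I‖ := by
    rw [besselK, ← hI, norm_mul, norm_div, norm_mul, norm_mul, Complex.norm_real, Real.norm_eq_abs,
      Complex.norm_real, Real.norm_eq_abs, Complex.norm_cpow_eq_rpow_re_of_pos hx0, hre,
      _root_.abs_of_nonneg (Real.sqrt_nonneg _), _root_.abs_of_nonneg (Real.exp_nonneg _)]
  have hxa : x ^ a * x ^ (-(a + 1/2)) = x ^ (-(1/2 : ℝ)) := by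
    rw [← Real.rpow_add hx0]
    norm_num
  have hMnn : (0:ℝ) ≤ Real.sqrt (Real.pi/2) * x ^ a * Real.exp (-x) := by positivity
  rw [habs]
  have hcE : (0:ℝ) < c * Real.exp (-(Real.pi * |ν.im|)) := by positivity
  calc Real.sqrt (Real.pi/2) * x ^ a * Real.exp (-x) / ‖Complex.Gamma (ν + 1/2)‖
        * ‖I‖
      ≤ Real.sqrt (Real.pi/2) * x ^ a * Real.exp (-x) / ‖Complex.Gamma (ν + 1/2)‖
        * (C2 * x ^ (-(a + 1/2))) :=
        mul_le_mul_of_nonneg_left key (by positivity)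
    _ = Real.sqrt (Real.pi/2) * x ^ a * Real.exp (-x) * (C2 * x ^ (-(a + 1/2)))
        / ‖Complex.Gamma (ν + 1/2)‖ := by ring
    _ ≤ Real.sqrt (Real.pi/2) * x ^ a * Real.exp (-x) * (C2 * x ^ (-(a + 1/2)))
        / (c * Real.exp (-(Real.pi * |ν.im|))) := by
        apply div_le_div_of_nonneg_left _ hcE hG
        positivity
    _ = Real.sqrt (Real.pi/2) * C2 / c * Real.exp (Real.pi * |ν.im|) * x ^ (-(1/2 : ℝ))
        * Real.exp (-x) := by
        rw [← hxa, Real.exp_neg (Real.pi * |ν.im|)]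
        field_simp
end

section
/- For complex ν with Re ν > 0 and real 0 < x ≤ 1, there is a constant C depending only on Re ν such that |K_ν(x)| ≤ C e^{π|Im ν|} x^{-Re ν}, where K_ν is given by the integral representation K_ν(x) = (π/2)^{1/2} x^ν e^{-x}/Γ(ν+1/2) ∫_0^∞ e^{-xτ}(τ+τ²/2)^{ν-1/2} dτ. -/
open Complex MeasureTheory
open Set

lemma my_abs_sin_le (z : ℂ) : ‖Complex.sin z‖ ≤ Real.exp |z.im| := by
  rw [Complex.sin]
  calc ‖(Complex.exp (-z * I) - Complex.exp (z * I)) * I / 2‖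
      = (‖Complex.exp (-z * I) - Complex.exp (z * I)‖) / 2 := by
        simp [norm_div, norm_mul]
    _ ≤ (‖Complex.exp (-z * I)‖ + ‖Complex.exp (z * I)‖) / 2 := by
        gcongr
        exact (norm_sub_le _ _)
    _ ≤ (Real.exp |z.im| + Real.exp |z.im|) / 2 := by
        gcongr <;> rw [Complex.norm_exp] <;> apply Real.exp_le_exp.2 <;>
          simp [neg_mul, Complex.mul_I_re] <;> cases abs_cases z.im <;> linarith
    _ = Real.exp |z.im| := by ring

lemma my_abs_Gamma_le {z : ℂ} (hz : 0 < z.re) :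
    ‖Complex.Gamma z‖ ≤ Real.Gamma z.re := by
  rw [Complex.Gamma_eq_integral hz, Real.Gamma_eq_integral hz]
  calc ‖∫ x in Ioi (0:ℝ), (Real.exp (-x) : ℂ) * (x:ℂ) ^ (z - 1)‖
      ≤ ∫ x in Ioi (0:ℝ), ‖(Real.exp (-x) : ℂ) * (x:ℂ) ^ (z - 1)‖ :=
        by exact norm_integral_le_integral_norm _
    _ = ∫ x in Ioi (0:ℝ), Real.exp (-x) * x ^ (z.re - 1) := by
        refine setIntegral_congr_fun measurableSet_Ioi fun x hx => ?_
        rw [norm_mul, Complex.norm_real, Real.norm_eq_abs,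
          Complex.norm_cpow_eq_rpow_re_of_pos hx, _root_.abs_of_nonneg (Real.exp_pos _).le]
        simp

lemma my_sinh_le {u : ℝ} (hu : 0 ≤ u) : Real.sinh u ≤ u * Real.exp u := by
  rw [Real.sinh_eq]
  have hAB : Real.exp u * Real.exp (-u) = 1 := by rw [← Real.exp_add]; simp
  have h2 : Real.exp (-u) * Real.exp (-u) = Real.exp (-(2*u)) := by
    rw [← Real.exp_add]; ring_nf
  have h3 := Real.add_one_le_exp (-(2*u))
  nlinarith [Real.exp_pos u, Real.exp_pos (-u)]

lemma my_gamma_lower : ∀ (n : ℕ) (σ : ℝ), 0 < σ → σ ≤ n →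
    ∃ c, 0 < c ∧ ∀ z : ℂ, z.re = σ →
      c * Real.exp (-(Real.pi * |z.im|)) ≤ ‖Complex.Gamma z‖ := by
  intro n
  induction n with
  | zero => intro σ h h0; norm_num at h0; linarith
  | succ n ih =>
    intro σ hσ hσn
    rcases lt_trichotomy σ 1 with h1 | h1 | h1
    · -- reflection case, 0 < σ < 1
      have hΓσ : 0 < Real.Gamma (1 - σ) := Real.Gamma_pos_of_pos (by linarith)
      refine ⟨Real.pi / Real.Gamma (1 - σ), by positivity, fun z hz => ?_⟩
      have hsin : Complex.sin (Real.pi * z) ≠ 0 := by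
        intro h
        rw [Complex.sin_eq_zero_iff] at h
        obtain ⟨k, hk⟩ := h
        have hπ : (Real.pi : ℂ) ≠ 0 := Complex.ofReal_ne_zero.mpr Real.pi_ne_zero
        have : z = (k : ℂ) := by
          have h2 : (Real.pi : ℂ) * z = (Real.pi : ℂ) * (k : ℂ) := by rw [hk]; ring
          exact mul_left_cancel₀ hπ h2
        have : σ = (k : ℝ) := by
          rw [← hz, this]; simp
        have h0 : (0:ℝ) < (k:ℝ) := this ▸ hσ
        have h1' : (k:ℝ) < 1 := this ▸ h1
        have : (0:ℤ) < k := by exact_mod_cast h0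
        have : (1:ℤ) ≤ k := this
        have : (1:ℝ) ≤ (k:ℝ) := by exact_mod_cast this
        linarith
      have hrefl := Complex.Gamma_mul_Gamma_one_sub z
      have hkey : Complex.Gamma z * Complex.Gamma (1 - z) * Complex.sin (Real.pi * z)
          = (Real.pi : ℂ) := by
        rw [hrefl, div_mul_cancel₀ _ hsin]
      have habs : ‖Complex.Gamma z‖ * (‖Complex.Gamma (1 - z)‖
          * ‖Complex.sin (Real.pi * z)‖) = Real.pi := by
        have := congrArg norm hkey
        rw [norm_mul, norm_mul] at this
        rw [← mul_assoc, this, Complex.norm_real, Real.norm_eq_abs, abs_of_pos Real.pi_pos]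
      have hb1 : ‖Complex.Gamma (1 - z)‖ ≤ Real.Gamma (1 - σ) := by
        have hre : (1 - z).re = 1 - σ := by simp [hz]
        have := my_abs_Gamma_le (z := 1 - z) (by rw [hre]; linarith)
        rwa [hre] at this
      have hb2 : ‖Complex.sin (Real.pi * z)‖ ≤ Real.exp (Real.pi * |z.im|) := by
        have := my_abs_sin_le (Real.pi * z)
        have him : (Real.pi * z : ℂ).im = Real.pi * z.im := by simp
        rwa [him, abs_mul, abs_of_pos Real.pi_pos] at this
      have hΓz : 0 < ‖Complex.Gamma z‖ := by
        have : Complex.Gamma z ≠ 0 := Complex.Gamma_ne_zero_of_re_pos (hz ▸ hσ)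
        simpa [norm_pos_iff] using this
      have hprod : ‖Complex.Gamma (1 - z)‖ * ‖Complex.sin (Real.pi * z)‖
          ≤ Real.Gamma (1 - σ) * Real.exp (Real.pi * |z.im|) := by
        apply mul_le_mul hb1 hb2 (by positivity) hΓσ.le
      have heq : Real.pi / Real.Gamma (1 - σ) * Real.exp (-(Real.pi * |z.im|))
          = Real.pi / (Real.Gamma (1 - σ) * Real.exp (Real.pi * |z.im|)) := by
        rw [Real.exp_neg]; field_simp
      rw [heq, div_le_iff₀ (by positivity)]
      calc Real.pi = ‖Complex.Gamma z‖ * (‖Complex.Gamma (1 - z)‖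
          * ‖Complex.sin (Real.pi * z)‖) := habs.symm
        _ ≤ ‖Complex.Gamma z‖ *
            (Real.Gamma (1 - σ) * Real.exp (Real.pi * |z.im|)) := by
            gcongr
    · -- σ = 1
      subst h1
      refine ⟨1, one_pos, fun z hz => ?_⟩
      rcases eq_or_ne z.im 0 with ht | ht
      · have hz1 : z = 1 := by
          apply Complex.ext <;> simp [hz, ht]
        simp [hz1, Complex.Gamma_one, ht]
      · set t := z.im with htdef
        have hw : z - 1 = (t : ℂ) * I := by
          apply Complex.ext <;> simp [hz, htdef]
        have hw0 : z - 1 ≠ 0 := by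
          rw [hw]; simp [ht]
        have hΓrec : Complex.Gamma z = (z - 1) * Complex.Gamma (z - 1) := by
          have := Complex.Gamma_add_one (z - 1) hw0
          rwa [sub_add_cancel] at this
        have hsin : Complex.sin (Real.pi * (z - 1)) ≠ 0 := by
          rw [hw, ← mul_assoc, ← Complex.ofReal_mul, Complex.sin_mul_I, ← Complex.ofReal_sinh]
          simp only [ne_eq, mul_eq_zero, Complex.I_ne_zero, or_false, Complex.ofReal_eq_zero,
            Real.sinh_eq_zero]
          rintro (h' | h')
          · exact absurd h' Real.pi_ne_zero
          · exact ht h'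
        have habs_sin : ‖Complex.sin (Real.pi * (z - 1))‖
            = Real.sinh (Real.pi * |t|) := by
          rw [hw, ← mul_assoc, ← Complex.ofReal_mul, Complex.sin_mul_I, norm_mul,
            Complex.norm_I, mul_one, ← Complex.ofReal_sinh, Complex.norm_real, Real.norm_eq_abs,
            Real.abs_sinh, abs_mul, abs_of_pos Real.pi_pos]
        have hrefl := Complex.Gamma_mul_Gamma_one_sub (z - 1)
        have hkey : Complex.Gamma (z-1) * Complex.Gamma (1 - (z-1))
            * Complex.sin (Real.pi * (z-1)) = (Real.pi : ℂ) := by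
          rw [hrefl, div_mul_cancel₀ _ hsin]
        have habs : ‖Complex.Gamma (z-1)‖ * (‖Complex.Gamma (1 - (z-1))‖
            * ‖Complex.sin (Real.pi * (z-1))‖) = Real.pi := by
          have := congrArg norm hkey
          rw [norm_mul, norm_mul] at this
          rw [← mul_assoc, this, Complex.norm_real, Real.norm_eq_abs, abs_of_pos Real.pi_pos]
        have hb1 : ‖Complex.Gamma (1 - (z-1))‖ ≤ 1 := by
          have hre : (1 - (z-1)).re = 1 := by simp [hz]
          have := my_abs_Gamma_le (z := 1 - (z-1)) (by rw [hre]; norm_num)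
          rwa [hre, Real.Gamma_one] at this
        have hΓw : 0 < ‖Complex.Gamma (z-1)‖ := by
          have : Complex.Gamma (z-1) ≠ 0 := by
            apply Complex.Gamma_ne_zero
            intro m hm
            apply hw0
            rw [hm]
            have : (z-1).im = 0 := by rw [hm]; simp
            simp only [Complex.sub_im, Complex.one_im, sub_zero] at this
            exact absurd this ht
          simpa [norm_pos_iff] using this
        have hsinh_pos : 0 < Real.sinh (Real.pi * |t|) := by
          apply Real.sinh_pos_iff.mpr
          have : 0 < |t| := abs_pos.mpr ht
          positivity
        -- abs Γ(z-1) ≥ π / (1 * sinh(π|t|))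
        have hΓw_lb : Real.pi / Real.sinh (Real.pi * |t|)
            ≤ ‖Complex.Gamma (z-1)‖ := by
          rw [div_le_iff₀ hsinh_pos]
          calc Real.pi = ‖Complex.Gamma (z-1)‖
                * (‖Complex.Gamma (1 - (z-1))‖
                * ‖Complex.sin (Real.pi * (z-1))‖) := habs.symm
            _ ≤ ‖Complex.Gamma (z-1)‖ * (1 * Real.sinh (Real.pi * |t|)) := by
                rw [habs_sin]; gcongr
            _ = ‖Complex.Gamma (z-1)‖ * Real.sinh (Real.pi * |t|) := by ring
        have habs_w : |t| ≤ ‖z - 1‖ := by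
          have := Complex.abs_im_le_norm (z - 1)
          simpa using this
        have hfin : Real.exp (-(Real.pi * |t|)) ≤ |t| * (Real.pi / Real.sinh (Real.pi * |t|)) := by
          rw [← mul_div_assoc, le_div_iff₀ hsinh_pos]
          have h1 : Real.exp (-(Real.pi*|t|)) * Real.exp (Real.pi*|t|) = 1 := by
            rw [← Real.exp_add]; simp
          calc Real.exp (-(Real.pi*|t|)) * Real.sinh (Real.pi*|t|)
              ≤ Real.exp (-(Real.pi*|t|)) * ((Real.pi*|t|) * Real.exp (Real.pi*|t|)) := by
                gcongr
                exact my_sinh_le (by positivity)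
            _ = |t| * Real.pi := by linear_combination (Real.pi * |t|) * h1
        calc 1 * Real.exp (-(Real.pi * |z.im|)) = Real.exp (-(Real.pi * |t|)) := by
              rw [one_mul]
          _ ≤ |t| * (Real.pi / Real.sinh (Real.pi * |t|)) := hfin
          _ ≤ ‖z - 1‖ * ‖Complex.Gamma (z - 1)‖ := by
              gcongr
          _ = ‖Complex.Gamma z‖ := by rw [hΓrec, norm_mul]
    · -- σ > 1
      have hσ1 : 0 < σ - 1 := by linarith
      have hσn' : σ - 1 ≤ n := by
        push_cast at hσn ⊢; linarith
      obtain ⟨c, hc, hbound⟩ := ih (σ - 1) hσ1 hσn'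
      refine ⟨(σ - 1) * c, by positivity, fun z hz => ?_⟩
      have hw0 : z - 1 ≠ 0 := fun h => by
        have h2 : (z - 1).re = 0 := by rw [h]; simp
        rw [Complex.sub_re, Complex.one_re, hz] at h2; linarith
      have hΓrec : Complex.Gamma z = (z - 1) * Complex.Gamma (z - 1) := by
        have := Complex.Gamma_add_one (z - 1) hw0
        rwa [sub_add_cancel] at this
      have hre : (z - 1).re = σ - 1 := by simp [hz]
      have hb := hbound (z - 1) hre
      have him : (z - 1).im = z.im := by simp
      rw [him] at hb
      have habs_w : σ - 1 ≤ ‖z - 1‖ := by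
        calc σ - 1 ≤ |(z-1).re| := by rw [hre]; exact le_abs_self _
          _ ≤ ‖z - 1‖ := Complex.abs_re_le_norm _
      calc (σ - 1) * c * Real.exp (-(Real.pi * |z.im|))
          = (σ - 1) * (c * Real.exp (-(Real.pi * |z.im|))) := by ring
        _ ≤ ‖z - 1‖ * ‖Complex.Gamma (z - 1)‖ := by
            gcongr
        _ = ‖Complex.Gamma z‖ := by rw [hΓrec, norm_mul]


lemma my_rpow_bound {p τ : ℝ} (hτ : 0 < τ) :
    (τ + τ^2/2) ^ p ≤ 2 ^ |p| * (τ ^ (if 0 ≤ p then p else 2*p) + τ ^ (2*p)) := by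
  have hτ2 : τ^2 = τ ^ ((2:ℕ):ℝ) := by rw [Real.rpow_natCast]
  have hsq : (τ^2) ^ p = τ ^ (2*p) := by
    rw [hτ2, ← Real.rpow_mul hτ.le]; norm_num
  rcases le_or_gt 0 p with hp | hp
  · rw [if_pos hp]
    have habs : |p| = p := abs_of_nonneg hp
    have h1 : τ + τ^2/2 ≤ 2 * max τ (τ^2) := by
      rcases le_total τ (τ^2) with h | h
      · rw [max_eq_right h]; nlinarith
      · rw [max_eq_left h]; nlinarith
    calc (τ + τ^2/2) ^ p ≤ (2 * max τ (τ^2)) ^ p := by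
          apply Real.rpow_le_rpow (by positivity) h1 hp
      _ = 2 ^ p * (max τ (τ^2)) ^ p := by
          rw [Real.mul_rpow (by norm_num) (by positivity)]
      _ ≤ 2 ^ |p| * (τ ^ p + τ ^ (2*p)) := by
          rw [habs]
          gcongr 2 ^ p * ?_
          rcases le_total τ (τ^2) with h | h
          · rw [max_eq_right h, ← hsq]
            have : (0:ℝ) ≤ τ ^ p := Real.rpow_nonneg hτ.le p
            linarith [Real.rpow_nonneg hτ.le p]
          · rw [max_eq_left h]
            have := Real.rpow_nonneg (by positivity : (0:ℝ) ≤ τ^2) p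
            rw [hsq] at this
            linarith
  · rw [if_neg (not_le.mpr hp)]
    have habs : |p| = -p := abs_of_neg hp
    have h1 : τ^2/2 ≤ τ + τ^2/2 := by nlinarith
    calc (τ + τ^2/2) ^ p ≤ (τ^2/2) ^ p :=
          Real.rpow_le_rpow_of_nonpos (by positivity) h1 hp.le
      _ = (τ^2) ^ p * (2:ℝ) ^ (-p) := by
          rw [div_eq_mul_inv, Real.mul_rpow (by positivity) (by positivity),
            ← Real.rpow_neg_one, ← Real.rpow_mul (by norm_num)]
          norm_num
      _ = 2 ^ |p| * τ ^ (2*p) := by rw [habs, hsq]; ring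
      _ ≤ 2 ^ |p| * (τ ^ (2*p) + τ ^ (2*p)) := by
          have h2 : (0:ℝ) ≤ τ ^ (2*p) := Real.rpow_nonneg hτ.le _
          nlinarith [Real.rpow_pos_of_pos (show (0:ℝ)<2 by norm_num) |p|]

lemma my_int_exp_rpow {s x : ℝ} (hs : -1 < s) (hx : 0 < x) :
    IntegrableOn (fun τ : ℝ => τ ^ s * Real.exp (-(x * τ))) (Set.Ioi 0) := by
  have h := integrableOn_rpow_mul_exp_neg_mul_rpow hs one_pos hx
  refine h.congr_fun (fun τ hτ => ?_) measurableSet_Ioi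
  simp only [Real.rpow_one, neg_mul]

lemma my_int_val {s x : ℝ} (hs : -1 < s) (hx : 0 < x) :
    ∫ τ in Set.Ioi (0:ℝ), τ ^ s * Real.exp (-(x * τ))
      = (1/x) ^ (s+1) * Real.Gamma (s+1) := by
  have h := Real.integral_rpow_mul_exp_neg_mul_Ioi (a := s+1) (by linarith) hx
  simpa using h

theorem besselK_bound_small (a : ℝ) (ha : 0 < a) :
    ∃ C : ℝ, ∀ ν : ℂ, ν.re = a → ∀ x : ℝ, 0 < x → x ≤ 1 →
      ‖besselK ν x‖
        ≤ C * Real.exp (Real.pi * |ν.im|) * x ^ (-a) := by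
  obtain ⟨p, hp⟩ : ∃ p : ℝ, p = a - 1/2 := ⟨_, rfl⟩
  obtain ⟨e1, he1⟩ : ∃ e1 : ℝ, e1 = if 0 ≤ p then p else 2*p := ⟨_, rfl⟩
  have hpval : -(1/2) < p := by rw [hp]; linarith
  have he1a : -1 < e1 := by
    rw [he1]; split
    · linarith
    · linarith
  have he1b : e1 ≤ 2*p := by
    rw [he1]; split
    · linarith
    · exact le_rfl
  have h2p : -1 < 2*p := by rw [hp]; linarith
  obtain ⟨c, hc, hΓlow⟩ := my_gamma_lower (⌈a⌉₊ + 1) (a + 1/2) (by linarith)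
    (by push_cast; linarith [Nat.le_ceil a])
  obtain ⟨CI, hCI⟩ : ∃ CI : ℝ,
      CI = 2 ^ |p| * (Real.Gamma (e1+1) + Real.Gamma (2*p+1)) := ⟨_, rfl⟩
  have hΓ1 : 0 < Real.Gamma (e1+1) := Real.Gamma_pos_of_pos (by linarith)
  have hΓ2 : 0 < Real.Gamma (2*p+1) := Real.Gamma_pos_of_pos (by linarith)
  have hCIpos : 0 < CI := by rw [hCI]; positivity
  refine ⟨Real.sqrt (Real.pi/2) * c⁻¹ * CI, ?_⟩
  intro ν hν x hx hx1
  set t := ν.im with htdef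
  have hre : (ν + 1/2).re = a + 1/2 := by
    simp [Complex.add_re, hν]
  have him : (ν + 1/2).im = t := by simp [htdef]
  have hΓ := hΓlow (ν + 1/2) hre
  rw [him] at hΓ
  have hcexp : 0 < c * Real.exp (-(Real.pi * |t|)) := by positivity
  have hΓpos : 0 < ‖Complex.Gamma (ν + 1/2)‖ := lt_of_lt_of_le hcexp hΓ
  -- integral bound
  set f : ℝ → ℂ := fun τ =>
    (Real.exp (-x * τ) : ℂ) * ((τ : ℂ) + (τ : ℂ) ^ 2 / 2) ^ (ν - 1 / 2) with hf
  set g : ℝ → ℝ := fun τ =>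
    2 ^ |p| * (τ ^ e1 * Real.exp (-(x*τ)) + τ ^ (2*p) * Real.exp (-(x*τ))) with hg
  have hgint : IntegrableOn g (Set.Ioi 0) :=
    ((my_int_exp_rpow he1a hx).add (my_int_exp_rpow h2p hx)).const_mul _
  have hnorm : ∀ τ ∈ Set.Ioi (0:ℝ), ‖f τ‖ ≤ g τ := by
    intro τ hτ
    rw [Set.mem_Ioi] at hτ
    have hres : (ν - 1/2).re = p := by
      simp [Complex.sub_re, hν, hp]
    have hcast : (τ:ℂ) + (τ:ℂ)^2/2 = ((τ + τ^2/2 : ℝ):ℂ) := by push_cast; ring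
    have hpos : (0:ℝ) < τ + τ^2/2 := by positivity
    rw [hf]
    simp only [norm_mul, Complex.norm_real, Real.norm_eq_abs,
      _root_.abs_of_nonneg (Real.exp_pos _).le, hcast,
      Complex.norm_cpow_eq_rpow_re_of_pos hpos, hres]
    rw [hg, neg_mul]
    calc Real.exp (-(x*τ)) * (τ + τ^2/2) ^ p
        ≤ Real.exp (-(x*τ)) * (2 ^ |p| * (τ ^ e1 + τ ^ (2*p))) := by
          gcongr
          rw [he1]
          exact my_rpow_bound hτ
      _ = 2 ^ |p| * (τ ^ e1 * Real.exp (-(x*τ)) + τ ^ (2*p) * Real.exp (-(x*τ))) := by ring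
  have hIb : ‖∫ τ in Set.Ioi (0:ℝ), f τ‖ ≤ CI * x ^ (-(2*a)) := by
    have hxv1 : (1/x) ^ (e1+1) = x ^ (-(e1+1)) := by
      rw [one_div, ← Real.rpow_neg_one x, ← Real.rpow_mul hx.le]
      norm_num
    have hxv2 : (1/x) ^ (2*p+1) = x ^ (-(2*p+1)) := by
      rw [one_div, ← Real.rpow_neg_one x, ← Real.rpow_mul hx.le]
      norm_num
    have hexp1 : x ^ (-(e1+1)) ≤ x ^ (-(2*a)) := by
      apply Real.rpow_le_rpow_of_exponent_ge hx hx1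
      linarith [he1b]
    have hexp2 : x ^ (-(2*p+1)) = x ^ (-(2*a)) := by
      rw [show -(2*p+1) = -(2*a) by rw [hp]; ring]
    calc ‖∫ τ in Set.Ioi (0:ℝ), f τ‖
        ≤ ∫ τ in Set.Ioi (0:ℝ), ‖f τ‖ := by
          exact norm_integral_le_integral_norm f
      _ ≤ ∫ τ in Set.Ioi (0:ℝ), g τ := by
          apply integral_mono_of_nonneg
          · exact Filter.Eventually.of_forall fun τ => norm_nonneg _
          · exact hgint
          · exact (ae_restrict_iff' measurableSet_Ioi).mpr (Filter.Eventually.of_forall hnorm)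
      _ = 2 ^ |p| * ((1/x) ^ (e1+1) * Real.Gamma (e1+1)
            + (1/x) ^ (2*p+1) * Real.Gamma (2*p+1)) := by
          simp only [hg]
          rw [integral_const_mul,
            MeasureTheory.integral_add (my_int_exp_rpow he1a hx) (my_int_exp_rpow h2p hx),
            my_int_val he1a hx, my_int_val h2p hx]
      _ ≤ 2 ^ |p| * (x ^ (-(2*a)) * Real.Gamma (e1+1)
            + x ^ (-(2*a)) * Real.Gamma (2*p+1)) := by
          rw [hxv1, hxv2, hexp2]
          gcongr
      _ = CI * x ^ (-(2*a)) := by rw [hCI]; ring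
  -- assemble
  have hxa : ‖(x:ℂ) ^ ν‖ = x ^ a := by
    rw [Complex.norm_cpow_eq_rpow_re_of_pos hx, hν]
  have habsK : ‖besselK ν x‖
      = Real.sqrt (Real.pi/2) * x ^ a * Real.exp (-x)
        / ‖Complex.Gamma (ν + 1/2)‖
        * ‖∫ τ in Set.Ioi (0:ℝ), f τ‖ := by
    rw [besselK, norm_mul, norm_div, norm_mul, norm_mul, hxa,
      Complex.norm_real, Complex.norm_real, Real.norm_eq_abs, Real.norm_eq_abs,
      _root_.abs_of_nonneg (Real.sqrt_nonneg _),
      _root_.abs_of_nonneg (Real.exp_pos _).le]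
  rw [habsK]
  have hxexp : Real.exp (-x) ≤ 1 := Real.exp_le_one_iff.mpr (by linarith)
  calc Real.sqrt (Real.pi/2) * x ^ a * Real.exp (-x)
        / ‖Complex.Gamma (ν + 1/2)‖
        * ‖∫ τ in Set.Ioi (0:ℝ), f τ‖
      ≤ Real.sqrt (Real.pi/2) * x ^ a * 1
        / (c * Real.exp (-(Real.pi * |t|)))
        * (CI * x ^ (-(2*a))) := by
        gcongr
        all_goals first | exact hxexp | exact hΓ | exact hIb | positivity
    _ = Real.sqrt (Real.pi/2) * c⁻¹ * CI * Real.exp (Real.pi * |t|)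
        * (x ^ a * x ^ (-(2*a))) := by
        rw [mul_one, Real.exp_neg, div_eq_mul_inv, mul_inv, inv_inv]
        ring
    _ = Real.sqrt (Real.pi/2) * c⁻¹ * CI * Real.exp (Real.pi * |t|) * x ^ (-a) := by
        rw [← Real.rpow_add hx, show a + -(2*a) = -a by ring]
end

section
/- For real x > 0 and s ≠ 0, the truncated Gamma-type integral satisfies |∫_x^∞ e^{-t} t^{2is-1} dt| ≤ C/|s| for an absolute constant C, obtained by integration by parts. -/
open Complex MeasureTheory Set Filter

theorem truncated_gamma_integral_bound_inv_s :
    ∃ C : ℝ, ∀ x : ℝ, 0 < x → ∀ s : ℝ, s ≠ 0 →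
      ‖∫ t in Set.Ioi x,
          (Real.exp (-t) : ℂ) * (t : ℂ) ^ (2 * (s : ℂ) * Complex.I - 1)‖
        ≤ C / |s| := by
  use 1
  intro x hx s hs
  set c : ℂ := 2 * (s : ℂ) * Complex.I with hc
  have hsabs : (0:ℝ) < |s| := abs_pos.mpr hs
  have hcabs : ‖c‖ = 2 * |s| := by
    simp [hc, norm_mul, Complex.norm_real, Complex.norm_I, Complex.norm_two]
  have hc0 : c ≠ 0 := by
    intro h
    rw [h, norm_zero] at hcabs
    nlinarith
  have hcre : c.re = 0 := by simp [hc]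
  -- the auxiliary functions
  set g : ℝ → ℂ := fun t => (Real.exp (-t) : ℂ) * ((t:ℂ) ^ c / c) with hg
  set g' : ℝ → ℂ := fun t =>
    -(Real.exp (-t) : ℂ) * ((t:ℂ) ^ c / c) + (Real.exp (-t) : ℂ) * (t:ℂ) ^ (c - 1) with hg'
  have hderiv : ∀ t ∈ Ici x, HasDerivAt g (g' t) t := by
    intro t ht
    have htpos : 0 < t := lt_of_lt_of_le hx ht
    have h1 : HasDerivAt (fun y : ℝ => (y:ℂ) ^ c / c) ((t:ℂ) ^ (c - 1)) t := by
      have := hasDerivAt_ofReal_cpow_const' (ne_of_gt htpos) (r := c - 1)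
        (by simpa [sub_eq_iff_eq_add] using hc0)
      simpa using this
    have h2 : HasDerivAt (fun y : ℝ => ((Real.exp (-y) : ℝ) : ℂ)) (-(Real.exp (-t)) : ℂ) t := by
      have : HasDerivAt (fun y : ℝ => Real.exp (-y)) (-(Real.exp (-t))) t := by
        simpa [Function.comp_def] using (Real.hasDerivAt_exp (-t)).comp t (hasDerivAt_neg t)
      simpa using this.ofReal_comp
    have h3 := h2.mul h1
    convert h3 using 1
    rfl
    rfl
  -- norms of integrands on Ioi x
  have hnorm1 : ∀ t ∈ Ioi x, ‖(Real.exp (-t) : ℂ) * (t:ℂ) ^ (c - 1)‖ = Real.exp (-t) / t := by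
    intro t ht
    have htpos : 0 < t := lt_trans hx ht
    rw [norm_mul, Complex.norm_real, Real.norm_eq_abs,
      Complex.norm_cpow_eq_rpow_re_of_pos htpos]
    have : (c - 1).re = -1 := by simp [hcre]
    rw [this, Real.rpow_neg_one, abs_of_pos (Real.exp_pos _)]
    ring
  have hnorm2 : ∀ t : ℝ, 0 < t → ‖(Real.exp (-t) : ℂ) * ((t:ℂ) ^ c / c)‖ =
      Real.exp (-t) / (2 * |s|) := by
    intro t htpos
    rw [norm_mul, norm_div, Complex.norm_real, Real.norm_eq_abs,
      Complex.norm_cpow_eq_rpow_re_of_pos htpos, hcre, Real.rpow_zero,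
      hcabs, abs_of_pos (Real.exp_pos _)]
    ring
  have hexpint : IntegrableOn (fun t : ℝ => Real.exp (-t)) (Ioi x) := by
    simpa using exp_neg_integrableOn_Ioi x one_pos
  -- measurability
  have hmeas : ∀ e : ℂ, AEStronglyMeasurable (fun t : ℝ => (Real.exp (-t) : ℂ) * (t:ℂ) ^ e)
      (volume.restrict (Ioi x)) := by
    intro e
    refine ContinuousOn.aestronglyMeasurable (fun t ht => ?_) measurableSet_Ioi
    exact (((Complex.continuous_ofReal.comp (Real.continuous_exp.comp
      continuous_neg)).continuousAt.mul
      (continuousAt_ofReal_cpow_const t e (Or.inr (ne_of_gt (lt_trans hx ht)))))).continuousWithinAt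
  have hint1 : IntegrableOn (fun t : ℝ => (Real.exp (-t) : ℂ) * (t:ℂ) ^ (c - 1)) (Ioi x) := by
    refine Integrable.mono' (hexpint.div_const x) (hmeas _) ?_
    refine (ae_restrict_iff' measurableSet_Ioi).2 (ae_of_all _ fun t ht => ?_)
    rw [hnorm1 t ht]
    have htpos : 0 < t := lt_trans hx ht
    gcongr
    exact le_of_lt ht
  have hint2 : IntegrableOn (fun t : ℝ => (Real.exp (-t) : ℂ) * ((t:ℂ) ^ c / c)) (Ioi x) := by
    refine Integrable.mono' (hexpint.div_const (2 * |s|)) ?_ ?_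
    · exact ((hmeas c).mul_const c⁻¹).congr
        (ae_of_all _ fun t => by simp [mul_assoc, div_eq_mul_inv])
    · refine (ae_restrict_iff' measurableSet_Ioi).2 (ae_of_all _ fun t ht => ?_)
      rw [hnorm2 t (lt_trans hx ht)]
  have hint' : IntegrableOn g' (Ioi x) := by
    have := (hint2.neg).add hint1
    refine this.congr (ae_of_all _ fun t => ?_)
    simp [hg']
  -- limit of g at infinity
  have htend : Tendsto g atTop (nhds (0 : ℂ)) := by
    apply squeeze_zero_norm' (a := fun t => Real.exp (-t) / (2 * |s|))
    · filter_upwards [eventually_gt_atTop 0] with t ht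
      exact le_of_eq (hnorm2 t ht)
    · simpa using (Real.tendsto_exp_neg_atTop_nhds_zero).div_const (2 * |s|)
  have hIBP : ∫ t in Ioi x, g' t = 0 - g x :=
    integral_Ioi_of_hasDerivAt_of_tendsto' hderiv hint' htend
  -- split the integral
  have hsplit : (∫ t in Ioi x, (Real.exp (-t) : ℂ) * (t:ℂ) ^ (c - 1)) =
      (∫ t in Ioi x, g' t) + ∫ t in Ioi x, (Real.exp (-t) : ℂ) * ((t:ℂ) ^ c / c) := by
    rw [← integral_add hint' hint2]
    refine setIntegral_congr_fun measurableSet_Ioi (fun t _ => ?_)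
    simp [hg']
  rw [hsplit, hIBP]
  have hb1 : ‖(0 : ℂ) - g x‖ ≤ 1 / (2 * |s|) := by
    rw [zero_sub, norm_neg, hnorm2 x hx]
    have : Real.exp (-x) ≤ 1 := Real.exp_le_one_iff.mpr (by linarith)
    gcongr
  have hb2 : ‖∫ t in Ioi x, (Real.exp (-t) : ℂ) * ((t:ℂ) ^ c / c)‖ ≤ 1 / (2 * |s|) := by
    calc ‖∫ t in Ioi x, (Real.exp (-t) : ℂ) * ((t:ℂ) ^ c / c)‖
        ≤ ∫ t in Ioi x, ‖(Real.exp (-t) : ℂ) * ((t:ℂ) ^ c / c)‖ :=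
          norm_integral_le_integral_norm _
      _ = ∫ t in Ioi x, Real.exp (-t) / (2 * |s|) := by
          refine setIntegral_congr_fun measurableSet_Ioi (fun t ht => ?_)
          exact hnorm2 t (lt_trans hx ht)
      _ = Real.exp (-x) / (2 * |s|) := by
          rw [integral_div, integral_exp_neg_Ioi]
      _ ≤ 1 / (2 * |s|) := by
          have : Real.exp (-x) ≤ 1 := Real.exp_le_one_iff.mpr (by linarith)
          gcongr
  calc ‖(0 - g x) + ∫ t in Ioi x, (Real.exp (-t) : ℂ) * ((t:ℂ) ^ c / c)‖
      ≤ ‖(0 : ℂ) - g x‖ + ‖∫ t in Ioi x, (Real.exp (-t) : ℂ) * ((t:ℂ) ^ c / c)‖ :=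
        norm_add_le _ _
    _ ≤ 1 / (2 * |s|) + 1 / (2 * |s|) := add_le_add hb1 hb2
    _ = 1 / |s| := by rw [← add_div]; rw [show (1:ℝ)+1 = 2 by norm_num]; rw [mul_comm, ← div_div, div_right_comm]; norm_num
end

section
/- For the hyperbolic change of variable τ = cosh r - 1, one has ∂_τ = (1/sinh r) ∂_r, and for every p ∈ ℕ there is C_p such that |∂_τ^p (1/sinh r)| ≤ C_p r^{-(2p+1)} for 0 < r ≤ 1 and |∂_τ^p (1/sinh r)| ≤ C_p (sinh r)^{-p-1} for r ≥ 1. -/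
/-- The operator `∂_τ = (1/sinh r) ∂_r` acting on functions of `r`. -/
noncomputable def dTau (f : ℝ → ℝ) : ℝ → ℝ :=
  fun r => (1 / Real.sinh r) * deriv f r

/-- Polynomials `g p` with `∂_τ^p (1/sinh r) = g p (cosh r) / sinh r ^ (2p+1)`. -/
noncomputable def gPoly : ℕ → Polynomial ℝ
  | 0 => 1
  | p + 1 => Polynomial.derivative (gPoly p) * (Polynomial.X ^ 2 - 1)
      - Polynomial.C ((2 * p : ℝ) + 1) * (Polynomial.X * gPoly p)

lemma gPoly_natDegree_le (p : ℕ) : (gPoly p).natDegree ≤ p := by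
  induction p with
  | zero => simp [gPoly]
  | succ p ih =>
    rw [gPoly]
    refine le_trans (Polynomial.natDegree_sub_le _ _) (max_le ?_ ?_)
    · rcases Nat.eq_zero_or_pos (gPoly p).natDegree with h0 | h1
      · obtain ⟨a, ha⟩ := Polynomial.natDegree_eq_zero.mp h0
        rw [← ha, Polynomial.derivative_C, zero_mul, Polynomial.natDegree_zero]
        omega
      · refine le_trans (Polynomial.natDegree_mul_le) ?_
        have h2 : (Polynomial.derivative (gPoly p)).natDegree ≤ (gPoly p).natDegree - 1 :=
          Polynomial.natDegree_derivative_le _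
        have h3 : (Polynomial.X ^ 2 - (1 : Polynomial ℝ)).natDegree ≤ 2 := by
          refine le_trans (Polynomial.natDegree_sub_le _ _) ?_
          simp [Polynomial.natDegree_X_pow]
        omega
    · refine le_trans (Polynomial.natDegree_mul_le) ?_
      have h3 : (Polynomial.X * gPoly p).natDegree ≤ 1 + p := by
        refine le_trans (Polynomial.natDegree_mul_le) ?_
        simp only [Polynomial.natDegree_X]
        omega
      simp only [Polynomial.natDegree_C]
      omega

lemma poly_abs_eval_le (P : Polynomial ℝ) {x : ℝ} (hx : 1 ≤ x) :
    |P.eval x| ≤ (∑ i ∈ Finset.range (P.natDegree + 1), |P.coeff i|) * x ^ P.natDegree := by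
  rw [Polynomial.eval_eq_sum_range, Finset.sum_mul]
  refine le_trans (Finset.abs_sum_le_sum_abs _ _) (Finset.sum_le_sum fun i hi => ?_)
  rw [abs_mul, abs_pow, abs_of_nonneg (by linarith : (0:ℝ) ≤ x)]
  exact mul_le_mul_of_nonneg_left
    (pow_le_pow_right₀ hx (Nat.lt_succ_iff.mp (Finset.mem_range.mp hi)))
    (abs_nonneg _)

lemma dTau_iter_eq (p : ℕ) : ∀ r : ℝ, 0 < r →
    dTau^[p] (fun r : ℝ => 1 / Real.sinh r) r
      = (gPoly p).eval (Real.cosh r) / Real.sinh r ^ (2 * p + 1) := by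
  induction p with
  | zero => intro r hr; simp [gPoly]
  | succ p ih =>
    intro r hr
    have hs : 0 < Real.sinh r := Real.sinh_pos_iff.mpr hr
    rw [Function.iterate_succ_apply']
    have hderiv : deriv (dTau^[p] (fun r : ℝ => 1 / Real.sinh r)) r
        = deriv (fun r => (gPoly p).eval (Real.cosh r) / Real.sinh r ^ (2 * p + 1)) r := by
      apply Filter.EventuallyEq.deriv_eq
      filter_upwards [Ioi_mem_nhds hr] with x hx using ih x hx
    have hnum : HasDerivAt (fun r => (gPoly p).eval (Real.cosh r))
        ((Polynomial.derivative (gPoly p)).eval (Real.cosh r) * Real.sinh r) r :=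
      ((gPoly p).hasDerivAt (Real.cosh r)).comp r (Real.hasDerivAt_cosh r)
    have hden : HasDerivAt (fun r => Real.sinh r ^ (2 * p + 1))
        ((2 * p + 1 : ℕ) * Real.sinh r ^ (2 * p + 1 - 1) * Real.cosh r) r :=
      (Real.hasDerivAt_sinh r).pow (2 * p + 1)
    have hdiv := hnum.div hden (pow_ne_zero _ hs.ne')
    rw [dTau, hderiv, show (fun r => (gPoly p).eval (Real.cosh r) / Real.sinh r ^ (2 * p + 1)) = (fun r => (gPoly p).eval (Real.cosh r)) / (fun r => Real.sinh r ^ (2 * p + 1)) from rfl, hdiv.deriv]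
    have hc2 : Real.cosh r ^ 2 = Real.sinh r ^ 2 + 1 := Real.cosh_sq r
    rw [gPoly]
    simp only [Polynomial.eval_sub, Polynomial.eval_mul, Polynomial.eval_pow,
      Polynomial.eval_X, Polynomial.eval_C, Polynomial.eval_one,
      Nat.add_sub_cancel]
    rw [show Real.cosh r ^ 2 - 1 = Real.sinh r ^ 2 from by
      have := Real.cosh_sq r; linarith]
    field_simp
    push_cast
    ring

theorem dTau_inv_sinh_bounds :
    (∀ f : ℝ → ℝ, ∀ r : ℝ, 0 < r → DifferentiableAt ℝ f (Real.cosh r - 1) →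
      deriv (fun r : ℝ => f (Real.cosh r - 1)) r
        = Real.sinh r * deriv f (Real.cosh r - 1)) ∧
    ∀ p : ℕ, ∃ C : ℝ,
      (∀ r : ℝ, 0 < r → r ≤ 1 →
        |dTau^[p] (fun r : ℝ => 1 / Real.sinh r) r| ≤ C * r ^ (-(2 * (p : ℝ) + 1))) ∧
      (∀ r : ℝ, 1 ≤ r →
        |dTau^[p] (fun r : ℝ => 1 / Real.sinh r) r| ≤ C * Real.sinh r ^ (-(p : ℝ) - 1)) := by
  constructor
  · intro f r _ hf
    have hin : HasDerivAt (fun r : ℝ => Real.cosh r - 1) (Real.sinh r) r :=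
      (Real.hasDerivAt_cosh r).sub_const 1
    have h2 : deriv (fun r : ℝ => f (Real.cosh r - 1)) r
        = deriv f (Real.cosh r - 1) * Real.sinh r := (hf.hasDerivAt.comp r hin).deriv
    rw [h2]; ring
  · intro p
    set S : ℝ := ∑ i ∈ Finset.range ((gPoly p).natDegree + 1), |(gPoly p).coeff i| with hS
    have hS0 : 0 ≤ S := Finset.sum_nonneg fun _ _ => abs_nonneg _
    refine ⟨S * Real.cosh 1 ^ p + S * 2 ^ p, ?_, ?_⟩
    · intro r hr hr1
      have hs : 0 < Real.sinh r := Real.sinh_pos_iff.mpr hr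
      have hrs : r ≤ Real.sinh r := Real.self_le_sinh_iff.mpr hr.le
      have hc1 : (1:ℝ) ≤ Real.cosh r := Real.one_le_cosh r
      have heval : |(gPoly p).eval (Real.cosh r)| ≤ S * Real.cosh 1 ^ p := by
        refine le_trans (poly_abs_eval_le _ hc1) ?_
        refine mul_le_mul_of_nonneg_left ?_ hS0
        calc Real.cosh r ^ (gPoly p).natDegree ≤ Real.cosh r ^ p :=
              pow_le_pow_right₀ hc1 (gPoly_natDegree_le p)
          _ ≤ Real.cosh 1 ^ p := by
              refine pow_le_pow_left₀ (by linarith) ?_ p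
              have : |r| ≤ |(1:ℝ)| := by rw [abs_of_pos hr, abs_one]; exact hr1
              rcases eq_or_lt_of_le this with h | h
              · have : Real.cosh r = Real.cosh 1 := by
                  rw [← Real.cosh_abs, ← Real.cosh_abs 1, h]
                exact this.le
              · exact (Real.cosh_lt_cosh.mpr h).le
      rw [dTau_iter_eq p r hr]
      have hrpow : r ^ (-(2 * (p : ℝ) + 1)) = (r ^ (2 * p + 1 : ℕ))⁻¹ := by
        rw [← Real.rpow_natCast r (2 * p + 1), ← Real.rpow_neg hr.le]
        norm_num
      rw [hrpow, abs_div, abs_pow, abs_of_pos hs]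
      have hpow_le : r ^ (2 * p + 1) ≤ Real.sinh r ^ (2 * p + 1) :=
        pow_le_pow_left₀ hr.le hrs _
      have hrp : 0 < r ^ (2 * p + 1 : ℕ) := pow_pos hr _
      calc |(gPoly p).eval (Real.cosh r)| / Real.sinh r ^ (2 * p + 1)
          ≤ (S * Real.cosh 1 ^ p) / r ^ (2 * p + 1) := by
            exact div_le_div₀ (by positivity) heval hrp hpow_le
        _ ≤ (S * Real.cosh 1 ^ p + S * 2 ^ p) * (r ^ (2 * p + 1 : ℕ))⁻¹ := by
            rw [div_eq_mul_inv]
            have : (0:ℝ) ≤ S * 2 ^ p := by positivity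
            have h2 : (0:ℝ) ≤ (r ^ (2 * p + 1 : ℕ))⁻¹ := by positivity
            nlinarith
    · intro r hr1
      have hr : 0 < r := lt_of_lt_of_le one_pos hr1
      have hs : 0 < Real.sinh r := Real.sinh_pos_iff.mpr hr
      have hsinh1 : (1:ℝ) ≤ Real.sinh 1 := by
        rw [Real.sinh_eq]
        have hmul : Real.exp (-1) * Real.exp 1 = 1 := by
          rw [← Real.exp_add]; norm_num
        nlinarith [Real.exp_one_gt_d9, Real.exp_pos (-1:ℝ), Real.exp_pos (1:ℝ),
          sq_nonneg (Real.exp 1 - 3)]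
      have hs1 : (1:ℝ) ≤ Real.sinh r := by
        calc (1:ℝ) ≤ Real.sinh 1 := hsinh1
          _ ≤ Real.sinh r := by
            rcases eq_or_lt_of_le hr1 with h | h
            · rw [h]
            · exact (Real.sinh_lt_sinh.mpr h).le
      have hcs : Real.cosh r ≤ 2 * Real.sinh r := by
        have := Real.cosh_sub_sinh r
        have hexp : Real.exp (-r) ≤ 1 := by
          rw [Real.exp_le_one_iff]; linarith
        linarith
      have hc1 : (1:ℝ) ≤ Real.cosh r := Real.one_le_cosh r
      have heval : |(gPoly p).eval (Real.cosh r)| ≤ S * (2 ^ p * Real.sinh r ^ p) := by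
        refine le_trans (poly_abs_eval_le _ hc1) ?_
        refine mul_le_mul_of_nonneg_left ?_ hS0
        calc Real.cosh r ^ (gPoly p).natDegree ≤ Real.cosh r ^ p :=
              pow_le_pow_right₀ hc1 (gPoly_natDegree_le p)
          _ ≤ (2 * Real.sinh r) ^ p := pow_le_pow_left₀ (by linarith) hcs p
          _ = 2 ^ p * Real.sinh r ^ p := mul_pow 2 _ p
      rw [dTau_iter_eq p r hr]
      have hspow : Real.sinh r ^ (-(p : ℝ) - 1) = (Real.sinh r ^ (p + 1 : ℕ))⁻¹ := by
        rw [show -(p:ℝ) - 1 = -((p + 1 : ℕ) : ℝ) by push_cast; ring,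
          Real.rpow_neg hs.le, Real.rpow_natCast]
      rw [hspow, abs_div, abs_pow, abs_of_pos hs]
      rw [div_le_iff₀ (by positivity)]
      have key : S * (2 ^ p * Real.sinh r ^ p) * Real.sinh r ^ (p + 1)
          ≤ (S * 2 ^ p) * Real.sinh r ^ (2 * p + 1) := by
        rw [show (2 * p + 1) = p + (p + 1) by ring, pow_add]
        ring_nf
        exact le_refl _
      calc |(gPoly p).eval (Real.cosh r)|
          ≤ S * (2 ^ p * Real.sinh r ^ p) := heval
        _ ≤ (S * Real.cosh 1 ^ p + S * 2 ^ p) * (Real.sinh r ^ (p + 1 : ℕ))⁻¹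
            * Real.sinh r ^ (2 * p + 1) := by
            have h1 : Real.sinh r ^ (2 * p + 1) = Real.sinh r ^ p * Real.sinh r ^ (p + 1) := by
              rw [← pow_add]; ring_nf
            rw [h1]
            have hinv : (Real.sinh r ^ (p + 1 : ℕ))⁻¹ * Real.sinh r ^ (p + 1) = 1 := by
              field_simp
            have hcosh1 : (0:ℝ) ≤ S * Real.cosh 1 ^ p := by
              have := Real.one_le_cosh 1; positivity
            calc S * (2 ^ p * Real.sinh r ^ p)
                ≤ (S * Real.cosh 1 ^ p + S * 2 ^ p) * Real.sinh r ^ p := by nlinarith [pow_nonneg hs.le p]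
              _ = (S * Real.cosh 1 ^ p + S * 2 ^ p) * (Real.sinh r ^ (p + 1 : ℕ))⁻¹
                  * (Real.sinh r ^ p * Real.sinh r ^ (p + 1)) := by
                  rw [mul_assoc]
                  congr 1
                  rw [show Real.sinh r ^ p * Real.sinh r ^ (p+1)
                    = Real.sinh r ^ (p+1) * Real.sinh r ^ p by ring, ← mul_assoc, hinv, one_mul]
end
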